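/- Let τ be a triangle with edge e₁ lying on a line, λ₁ the barycentric coordinate vanishing on e₁, and √a a smooth positive weight. Then there exist unique quadratic polynomials p₁², p₂² on τ such that the cubics p₁³ = λ₁ p₁² + 1 and p₂³ = λ₁ p₂² + λ₂ are orthogonal to all quadratics in the √a-weighted L²(τ) inner product; moreover p₁³ and p₂³ restricted to e₁ are linear (equal to 1 and λ₂ respectively) and span a 2-dimensional space whose elements are determined on e₁ by their weighted zero and first moments. -/

import Mathlib

set_option maxHeartbeats 1000000

open MeasureTheory
open scoped MeasureTheory

/-- `p` is (the function of) a polynomial of total degree at most `k` on `ℝ²`. -/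
def IsPolyDegE (k : ℕ) (p : EuclideanSpace ℝ (Fin 2) → ℝ) : Prop :=
  ∃ q : MvPolynomial (Fin 2) ℝ, q.totalDegree ≤ k ∧
    ∀ x : EuclideanSpace ℝ (Fin 2), p x = MvPolynomial.eval x q

noncomputable section

/-- evaluation of polynomials as a linear map into functions -/
def evalL : MvPolynomial (Fin 2) ℝ →ₗ[ℝ] (EuclideanSpace ℝ (Fin 2) → ℝ) where
  toFun q := fun x => MvPolynomial.eval x q
  map_add' p q := by funext x; simp
  map_smul' c p := by funext x; simp [MvPolynomial.smul_eval]

def P2 : Submodule ℝ (EuclideanSpace ℝ (Fin 2) → ℝ) :=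
  (MvPolynomial.restrictTotalDegree (Fin 2) ℝ 2).map evalL

instance : Module.Finite ℝ P2 := Module.Finite.map _ _

lemma analytic_eval (q : MvPolynomial (Fin 2) ℝ) :
    AnalyticOnNhd ℝ (fun x : EuclideanSpace ℝ (Fin 2) => MvPolynomial.eval x q) Set.univ := by
  induction q using MvPolynomial.induction_on with
  | C c => simpa using analyticOnNhd_const
  | add p q hp hq => simp only [map_add]; exact hp.add hq
  | mul_X p n hp =>
      have hX : AnalyticOnNhd ℝ (fun x : EuclideanSpace ℝ (Fin 2) => x n) Set.univ :=
        ((EuclideanSpace.proj n : EuclideanSpace ℝ (Fin 2) →L[ℝ] ℝ).analyticOnNhd Set.univ :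
          AnalyticOnNhd ℝ (fun x => EuclideanSpace.proj n x) Set.univ)
      simp only [map_mul, MvPolynomial.eval_X]
      exact hp.mul hX

lemma continuous_eval (q : MvPolynomial (Fin 2) ℝ) :
    Continuous (fun x : EuclideanSpace ℝ (Fin 2) => MvPolynomial.eval x q) := by
  rw [← continuousOn_univ]
  exact (analytic_eval q).continuousOn

lemma mem_P2 {p : EuclideanSpace ℝ (Fin 2) → ℝ} : p ∈ P2 ↔ IsPolyDegE 2 p := by
  constructor
  · rintro ⟨q, hq, rfl⟩
    exact ⟨q, (MvPolynomial.mem_restrictTotalDegree _ _ _).1 hq, fun x => rfl⟩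
  · rintro ⟨q, hq, hpq⟩
    exact ⟨q, (MvPolynomial.mem_restrictTotalDegree _ _ _).2 hq, (funext hpq).symm⟩

lemma continuous_of_isPolyDegE' {k} {p : EuclideanSpace ℝ (Fin 2) → ℝ}
    (h : IsPolyDegE k p) : Continuous p := by
  obtain ⟨q, -, hpq⟩ := h
  have : p = fun x : EuclideanSpace ℝ (Fin 2) => MvPolynomial.eval x q := funext hpq
  rw [this]; exact continuous_eval q

lemma eval_zero_of_zero_on_open {q : MvPolynomial (Fin 2) ℝ} {U : Set (EuclideanSpace ℝ (Fin 2))}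
    (hU : IsOpen U) (hne : U.Nonempty) (h : ∀ x ∈ U, MvPolynomial.eval x q = 0) :
    ∀ x, MvPolynomial.eval x q = 0 := by
  obtain ⟨z, hz⟩ := hne
  have h0 : (fun x : EuclideanSpace ℝ (Fin 2) => MvPolynomial.eval x q) =ᶠ[nhds z] 0 :=
    Filter.eventually_of_mem (hU.mem_nhds hz) h
  have := (analytic_eval q).eqOn_zero_of_preconnected_of_eventuallyEq_zero
    isPreconnected_univ (Set.mem_univ z) h0
  intro x
  exact this (Set.mem_univ x)

lemma zero_of_isPolyDegE'_zero_on_open {k} {p : EuclideanSpace ℝ (Fin 2) → ℝ}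
    (hp : IsPolyDegE k p) {U : Set (EuclideanSpace ℝ (Fin 2))}
    (hU : IsOpen U) (hne : U.Nonempty) (h : ∀ x ∈ U, p x = 0) : p = 0 := by
  obtain ⟨q, -, hpq⟩ := hp
  funext x
  rw [hpq]
  exact eval_zero_of_zero_on_open hU hne (fun y hy => (hpq y).symm.trans (h y hy)) x


end

/-- Existence and uniqueness of the quadratics `p₁², p₂²` making the cubics
`p₁³ = λ₁p₁² + 1` and `p₂³ = λ₁p₂² + λ₂` orthogonal to all quadratics in the
`√a`-weighted `L²(τ)` inner product; on the edge `e₁` these cubics equal `1`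
and `λ₂` (hence are linear there), and elements of their span are determined
on `e₁` by their weighted zero and first moments. -/
theorem stmt17
    (v₁ v₂ v₃ : EuclideanSpace ℝ (Fin 2))
    (hind : AffineIndependent ℝ ![v₁, v₂, v₃])
    (L1 L2 : EuclideanSpace ℝ (Fin 2) →ᵃ[ℝ] ℝ)
    (hL1 : L1 v₁ = 1 ∧ L1 v₂ = 0 ∧ L1 v₃ = 0)
    (hL2 : L2 v₂ = 1 ∧ L2 v₁ = 0 ∧ L2 v₃ = 0)
    (a : EuclideanSpace ℝ (Fin 2) → ℝ) (ha : Continuous a)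
    (hapos : ∀ x, 0 < a x) :
    (∃! pq : (EuclideanSpace ℝ (Fin 2) → ℝ) × (EuclideanSpace ℝ (Fin 2) → ℝ),
      IsPolyDegE 2 pq.1 ∧ IsPolyDegE 2 pq.2 ∧
      (∀ q, IsPolyDegE 2 q →
        ∫ x in convexHull ℝ {v₁, v₂, v₃},
          (L1 x * pq.1 x + 1) * q x * Real.sqrt (a x) = 0) ∧
      (∀ q, IsPolyDegE 2 q →
        ∫ x in convexHull ℝ {v₁, v₂, v₃},
          (L1 x * pq.2 x + L2 x) * q x * Real.sqrt (a x) = 0)) ∧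
    (∀ pq : (EuclideanSpace ℝ (Fin 2) → ℝ) × (EuclideanSpace ℝ (Fin 2) → ℝ),
      (IsPolyDegE 2 pq.1 ∧ IsPolyDegE 2 pq.2 ∧
       (∀ q, IsPolyDegE 2 q →
         ∫ x in convexHull ℝ {v₁, v₂, v₃},
           (L1 x * pq.1 x + 1) * q x * Real.sqrt (a x) = 0) ∧
       (∀ q, IsPolyDegE 2 q →
         ∫ x in convexHull ℝ {v₁, v₂, v₃},
           (L1 x * pq.2 x + L2 x) * q x * Real.sqrt (a x) = 0)) →
      (∀ x ∈ segment ℝ v₂ v₃,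
        L1 x * pq.1 x + 1 = 1 ∧ L1 x * pq.2 x + L2 x = L2 x) ∧
      (∀ c₁ c₂ : ℝ,
        (∫ x in segment ℝ v₂ v₃,
            (c₁ * (L1 x * pq.1 x + 1) + c₂ * (L1 x * pq.2 x + L2 x)) *
              Real.sqrt (a x) ∂μH[1]) = 0 →
        (∫ x in segment ℝ v₂ v₃,
            (c₁ * (L1 x * pq.1 x + 1) + c₂ * (L1 x * pq.2 x + L2 x)) * L2 x *
              Real.sqrt (a x) ∂μH[1]) = 0 →
        c₁ = 0 ∧ c₂ = 0)) := by
  set τ : Set (EuclideanSpace ℝ (Fin 2)) := convexHull ℝ {v₁, v₂, v₃} with hτ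
  have hfin : ({v₁, v₂, v₃} : Set (EuclideanSpace ℝ (Fin 2))).Finite := by
    apply Set.toFinite
  have hcomp : IsCompact τ := hfin.isCompact_convexHull (𝕜 := ℝ)
  have hmeas : MeasurableSet τ := hcomp.isClosed.measurableSet
  have hrange : Set.range ![v₁, v₂, v₃] = ({v₁, v₂, v₃} : Set (EuclideanSpace ℝ (Fin 2))) := by
    ext y
    constructor
    · rintro ⟨i, rfl⟩
      fin_cases i <;> simp
    · rintro (rfl | rfl | rfl)
      exacts [⟨0, rfl⟩, ⟨1, rfl⟩, ⟨2, rfl⟩]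
  have hspan : affineSpan ℝ ({v₁, v₂, v₃} : Set (EuclideanSpace ℝ (Fin 2))) = ⊤ := by
    rw [← hrange, hind.affineSpan_eq_top_iff_card_eq_finrank_add_one]
    simp [finrank_euclideanSpace_fin]
  have hint : (interior τ).Nonempty :=
    interior_convexHull_nonempty_iff_affineSpan_eq_top.2 hspan
  have hL1nonneg : ∀ x ∈ τ, 0 ≤ L1 x := by
    intro x hx
    have hsub : τ ⊆ L1 ⁻¹' Set.Ici 0 := by
      apply convexHull_min _ ((convex_Ici (0:ℝ)).affine_preimage L1)
      rintro y (rfl | rfl | rfl)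
      · simp [hL1.1]
      · simp [hL1.2.1]
      · simp [hL1.2.2]
    exact hsub hx
  have hL1pos : ∀ x ∈ interior τ, 0 < L1 x := by
    intro x hx
    rcases (hL1nonneg x (interior_subset hx)).lt_or_eq with h | h
    · exact h
    exfalso
    set u : EuclideanSpace ℝ (Fin 2) := v₂ - v₁ with hu
    have hlin : L1.linear u = -1 := by
      have h2 := AffineMap.linearMap_vsub L1 v₂ v₁
      simp only [vsub_eq_sub] at h2
      rw [hu, h2, hL1.2.1, hL1.1]
      norm_num
    obtain ⟨ε, hε, hball⟩ := Metric.isOpen_iff.1 isOpen_interior x hx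
    set t : ℝ := ε / (2 * ‖u‖ + 1) with ht
    have hden : (0:ℝ) < 2 * ‖u‖ + 1 := by positivity
    have htpos : 0 < t := by positivity
    have hmem : x + t • u ∈ Metric.ball x ε := by
      rw [Metric.mem_ball, dist_eq_norm]
      have : x + t • u - x = t • u := by abel
      rw [this, norm_smul, Real.norm_eq_abs, abs_of_pos htpos, ht, div_mul_eq_mul_div,
        div_lt_iff₀ hden]
      nlinarith [norm_nonneg u]
    have hτmem : x + t • u ∈ τ := interior_subset (hball hmem)
    have hval : L1 (x + t • u) = L1 x + t * L1.linear u := by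
      have := L1.map_vadd x (t • u)
      simpa [vadd_eq_add, add_comm, _root_.map_smul, smul_eq_mul] using this
    have : L1 (x + t • u) < 0 := by
      rw [hval, ← h, hlin]; nlinarith
    exact absurd (hL1nonneg _ hτmem) (not_le.2 this)
  have hsqrt_cont : Continuous fun x : EuclideanSpace ℝ (Fin 2) => Real.sqrt (a x) :=
    Real.continuous_sqrt.comp ha
  have hsqrt_pos : ∀ x : EuclideanSpace ℝ (Fin 2), 0 < Real.sqrt (a x) := fun x =>
    Real.sqrt_pos.2 (hapos x)
  have hL1cont : Continuous fun x : EuclideanSpace ℝ (Fin 2) => L1 x :=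
    L1.continuous_of_finiteDimensional
  have hL2cont : Continuous fun x : EuclideanSpace ℝ (Fin 2) => L2 x :=
    L2.continuous_of_finiteDimensional
  have hInt : ∀ f : EuclideanSpace ℝ (Fin 2) → ℝ, Continuous f → IntegrableOn f τ volume :=
    fun f hf => hf.continuousOn.integrableOn_compact hcomp
  have key : ∀ f : EuclideanSpace ℝ (Fin 2) → ℝ, Continuous f →
      (∫ x in τ, L1 x * f x * f x * Real.sqrt (a x)) = 0 → ∀ x ∈ interior τ, f x = 0 := by
    intro f hf hzero x hx
    by_contra hfx
    set h : EuclideanSpace ℝ (Fin 2) → ℝ := fun y => L1 y * f y * f y * Real.sqrt (a y) with hh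
    have hhc : Continuous h := ((hL1cont.mul hf).mul hf).mul hsqrt_cont
    have hnonneg : ∀ y ∈ τ, 0 ≤ h y := by
      intro y hy
      have : h y = L1 y * (f y * f y) * Real.sqrt (a y) := by rw [hh]; ring
      rw [this]
      exact mul_nonneg (mul_nonneg (hL1nonneg y hy) (mul_self_nonneg _)) (Real.sqrt_nonneg _)
    have hae : 0 ≤ᵐ[volume.restrict τ] h :=
      (ae_restrict_iff' hmeas).2 (Filter.Eventually.of_forall hnonneg)
    have hintg : Integrable h (volume.restrict τ) := hInt h hhc
    have hae0 : h =ᵐ[volume.restrict τ] 0 :=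
      (integral_eq_zero_iff_of_nonneg_ae hae hintg).1 hzero
    have hNmeas : MeasurableSet {y | h y ≠ 0} := by
      have : IsClosed {y | h y = 0} := isClosed_eq hhc continuous_const
      exact this.measurableSet.compl
    have hrstr : volume.restrict τ {y | h y ≠ 0} = 0 := by
      have := hae0
      rw [Filter.EventuallyEq, ae_iff] at this
      simpa using this
    set U : Set (EuclideanSpace ℝ (Fin 2)) := {y | h y ≠ 0} ∩ interior τ with hU
    have hUopen : IsOpen U := by
      have : IsOpen {y | h y ≠ 0} := (isClosed_eq hhc continuous_const).isOpen_compl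
      exact this.inter isOpen_interior
    have hxU : x ∈ U := by
      constructor
      · show h x ≠ 0
        have : 0 < h x := by
          have h1 := hL1pos x hx
          have h2 := hsqrt_pos x
          have : h x = L1 x * (f x * f x) * Real.sqrt (a x) := by rw [hh]; ring
          rw [this]
          have hf2 : 0 < f x * f x := mul_self_pos.2 hfx
          exact mul_pos (mul_pos h1 hf2) h2
        exact ne_of_gt this
      · exact hx
    have hU0 : volume U = 0 := by
      have hle : volume U ≤ volume.restrict τ {y | h y ≠ 0} := by
        rw [Measure.restrict_apply hNmeas]
        exact measure_mono (Set.inter_subset_inter_right _ interior_subset)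
      exact le_antisymm (hrstr ▸ hle) (by simp)
    exact (hUopen.measure_pos volume ⟨x, hxU⟩).ne' hU0
  have contP2 : ∀ p : P2, Continuous (p : EuclideanSpace ℝ (Fin 2) → ℝ) := fun p =>
    continuous_of_isPolyDegE' (mem_P2.1 p.2)
  have intB : ∀ f g : EuclideanSpace ℝ (Fin 2) → ℝ, Continuous f → Continuous g →
      IntegrableOn (fun x => L1 x * f x * g x * Real.sqrt (a x)) τ volume :=
    fun f g hf hg => hInt _ (((hL1cont.mul hf).mul hg).mul hsqrt_cont)
  have intC : ∀ f g : EuclideanSpace ℝ (Fin 2) → ℝ, Continuous f → Continuous g →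
      IntegrableOn (fun x => f x * g x * Real.sqrt (a x)) τ volume :=
    fun f g hf hg => hInt _ ((hf.mul hg).mul hsqrt_cont)
  have Badd : ∀ f₁ f₂ g : EuclideanSpace ℝ (Fin 2) → ℝ, Continuous f₁ → Continuous f₂ →
      Continuous g →
      (∫ x in τ, L1 x * (f₁ x + f₂ x) * g x * Real.sqrt (a x)) =
      (∫ x in τ, L1 x * f₁ x * g x * Real.sqrt (a x)) +
      (∫ x in τ, L1 x * f₂ x * g x * Real.sqrt (a x)) := by
    intro f₁ f₂ g h₁ h₂ hg
    rw [← integral_add (intB f₁ g h₁ hg) (intB f₂ g h₂ hg)]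
    apply setIntegral_congr_fun hmeas
    intro x _
    ring
  have Bsmul : ∀ (c : ℝ) (f g : EuclideanSpace ℝ (Fin 2) → ℝ), Continuous f → Continuous g →
      (∫ x in τ, L1 x * (c * f x) * g x * Real.sqrt (a x)) =
      c * ∫ x in τ, L1 x * f x * g x * Real.sqrt (a x) := by
    intro c f g hf hg
    rw [← smul_eq_mul, ← integral_smul]
    apply setIntegral_congr_fun hmeas
    intro x _
    simp only [smul_eq_mul]
    ring
  have Badd₂ : ∀ f g₁ g₂ : EuclideanSpace ℝ (Fin 2) → ℝ, Continuous f → Continuous g₁ →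
      Continuous g₂ →
      (∫ x in τ, L1 x * f x * (g₁ x + g₂ x) * Real.sqrt (a x)) =
      (∫ x in τ, L1 x * f x * g₁ x * Real.sqrt (a x)) +
      (∫ x in τ, L1 x * f x * g₂ x * Real.sqrt (a x)) := by
    intro f g₁ g₂ hf h₁ h₂
    rw [← integral_add (intB f g₁ hf h₁) (intB f g₂ hf h₂)]
    apply setIntegral_congr_fun hmeas
    intro x _
    ring
  have Bsmul₂ : ∀ (c : ℝ) (f g : EuclideanSpace ℝ (Fin 2) → ℝ), Continuous f → Continuous g →
      (∫ x in τ, L1 x * f x * (c * g x) * Real.sqrt (a x)) =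
      c * ∫ x in τ, L1 x * f x * g x * Real.sqrt (a x) := by
    intro c f g hf hg
    rw [← smul_eq_mul, ← integral_smul]
    apply setIntegral_congr_fun hmeas
    intro x _
    simp only [smul_eq_mul]
    ring
  set T : P2 →ₗ[ℝ] Module.Dual ℝ P2 :=
    LinearMap.mk₂ ℝ
      (fun p q : P2 =>
        ∫ x in τ, L1 x * (p : EuclideanSpace ℝ (Fin 2) → ℝ) x *
          (q : EuclideanSpace ℝ (Fin 2) → ℝ) x * Real.sqrt (a x))
      (fun p₁ p₂ q => by
        simp only [Submodule.coe_add, Pi.add_apply]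
        exact Badd _ _ _ (contP2 p₁) (contP2 p₂) (contP2 q))
      (fun c p q => by
        simp only [SetLike.val_smul, Pi.smul_apply, smul_eq_mul]
        exact Bsmul c _ _ (contP2 p) (contP2 q))
      (fun p q₁ q₂ => by
        simp only [Submodule.coe_add, Pi.add_apply]
        exact Badd₂ _ _ _ (contP2 p) (contP2 q₁) (contP2 q₂))
      (fun c p q => by
        simp only [SetLike.val_smul, Pi.smul_apply, smul_eq_mul]
        exact Bsmul₂ c _ _ (contP2 p) (contP2 q)) with hTdef
  have hTapp : ∀ p q : P2, T p q =
      ∫ x in τ, L1 x * (p : EuclideanSpace ℝ (Fin 2) → ℝ) x *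
        (q : EuclideanSpace ℝ (Fin 2) → ℝ) x * Real.sqrt (a x) := fun p q => rfl
  have hTinj : Function.Injective T := by
    rw [injective_iff_map_eq_zero]
    intro p hp
    have h0 : (∫ x in τ, L1 x * (p : EuclideanSpace ℝ (Fin 2) → ℝ) x *
        (p : EuclideanSpace ℝ (Fin 2) → ℝ) x * Real.sqrt (a x)) = 0 := by
      rw [← hTapp p p, hp]
      rfl
    have hzero := key _ (contP2 p) h0
    have : (p : EuclideanSpace ℝ (Fin 2) → ℝ) = 0 :=
      zero_of_isPolyDegE'_zero_on_open (mem_P2.1 p.2) isOpen_interior hint hzero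
    exact Subtype.ext this
  have hTsurj : Function.Surjective T :=
    (LinearMap.injective_iff_surjective_of_finrank_eq_finrank
      (Subspace.dual_finrank_eq (K := ℝ) (V := P2)).symm).1 hTinj
  have Cadd : ∀ f g₁ g₂ : EuclideanSpace ℝ (Fin 2) → ℝ, Continuous f → Continuous g₁ →
      Continuous g₂ →
      (∫ x in τ, f x * (g₁ x + g₂ x) * Real.sqrt (a x)) =
      (∫ x in τ, f x * g₁ x * Real.sqrt (a x)) +
      (∫ x in τ, f x * g₂ x * Real.sqrt (a x)) := by
    intro f g₁ g₂ hf h₁ h₂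
    rw [← integral_add (intC f g₁ hf h₁) (intC f g₂ hf h₂)]
    apply setIntegral_congr_fun hmeas
    intro x _
    ring
  have Csmul : ∀ (c : ℝ) (f g : EuclideanSpace ℝ (Fin 2) → ℝ), Continuous f → Continuous g →
      (∫ x in τ, f x * (c * g x) * Real.sqrt (a x)) =
      c * ∫ x in τ, f x * g x * Real.sqrt (a x) := by
    intro c f g hf hg
    rw [← smul_eq_mul, ← integral_smul]
    apply setIntegral_congr_fun hmeas
    intro x _
    simp only [smul_eq_mul]
    ring
  have exist_p : ∀ f : EuclideanSpace ℝ (Fin 2) → ℝ, Continuous f →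
      ∃ p : EuclideanSpace ℝ (Fin 2) → ℝ, IsPolyDegE 2 p ∧ ∀ q, IsPolyDegE 2 q →
        (∫ x in τ, (L1 x * p x + f x) * q x * Real.sqrt (a x)) = 0 := by
    intro f hf
    set φ : Module.Dual ℝ P2 :=
      { toFun := fun q : P2 =>
          -∫ x in τ, f x * (q : EuclideanSpace ℝ (Fin 2) → ℝ) x * Real.sqrt (a x)
        map_add' := fun q₁ q₂ => by
          simp only [Submodule.coe_add, Pi.add_apply]
          rw [Cadd _ _ _ hf (contP2 q₁) (contP2 q₂)]
          ring
        map_smul' := fun c q => by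
          simp only [SetLike.val_smul, Pi.smul_apply, smul_eq_mul, RingHom.id_apply]
          rw [Csmul c _ _ hf (contP2 q)]
          ring } with hφ
    obtain ⟨P, hP⟩ := hTsurj φ
    refine ⟨(P : EuclideanSpace ℝ (Fin 2) → ℝ), mem_P2.1 P.2, ?_⟩
    intro q hq
    have hq' : q ∈ P2 := mem_P2.2 hq
    have hqc : Continuous q := continuous_of_isPolyDegE' hq
    have heq := LinearMap.congr_fun hP ⟨q, hq'⟩
    have heq' : (∫ x in τ, L1 x * (P : EuclideanSpace ℝ (Fin 2) → ℝ) x * q x * Real.sqrt (a x)) =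
        -∫ x in τ, f x * q x * Real.sqrt (a x) := heq
    rw [setIntegral_congr_fun hmeas
      (show Set.EqOn (fun x => (L1 x * (P : EuclideanSpace ℝ (Fin 2) → ℝ) x + f x) * q x *
          Real.sqrt (a x))
        (fun x => L1 x * (P : EuclideanSpace ℝ (Fin 2) → ℝ) x * q x * Real.sqrt (a x) +
          f x * q x * Real.sqrt (a x)) τ from fun x _ => by ring),
      integral_add (intB _ _ (contP2 P) hqc) (intC _ _ hf hqc), heq']
    ring
  have uniq_p : ∀ f p p' : EuclideanSpace ℝ (Fin 2) → ℝ, Continuous f →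
      IsPolyDegE 2 p → IsPolyDegE 2 p' →
      (∀ q, IsPolyDegE 2 q →
        (∫ x in τ, (L1 x * p x + f x) * q x * Real.sqrt (a x)) = 0) →
      (∀ q, IsPolyDegE 2 q →
        (∫ x in τ, (L1 x * p' x + f x) * q x * Real.sqrt (a x)) = 0) → p = p' := by
    intro f p p' hf hp hp' h1 h2
    have hpc : Continuous p := continuous_of_isPolyDegE' hp
    have hpc' : Continuous p' := continuous_of_isPolyDegE' hp'
    set d : EuclideanSpace ℝ (Fin 2) → ℝ := fun x => p x - p' x with hd
    have hdmem : d ∈ P2 := by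
      have := Submodule.sub_mem P2 (mem_P2.2 hp) (mem_P2.2 hp')
      convert this using 1
      rfl
    have hdpoly : IsPolyDegE 2 d := mem_P2.1 hdmem
    have hdc : Continuous d := continuous_of_isPolyDegE' hdpoly
    have h1d := h1 d hdpoly
    have h2d := h2 d hdpoly
    have hzero : (∫ x in τ, L1 x * d x * d x * Real.sqrt (a x)) = 0 := by
      have hi1 : IntegrableOn
          (fun x => (L1 x * p x + f x) * d x * Real.sqrt (a x)) τ volume :=
        hInt _ ((((hL1cont.mul hpc).add hf).mul hdc).mul hsqrt_cont)
      have hi2 : IntegrableOn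
          (fun x => (L1 x * p' x + f x) * d x * Real.sqrt (a x)) τ volume :=
        hInt _ ((((hL1cont.mul hpc').add hf).mul hdc).mul hsqrt_cont)
      rw [setIntegral_congr_fun hmeas
        (show Set.EqOn (fun x => L1 x * d x * d x * Real.sqrt (a x))
          (fun x => (L1 x * p x + f x) * d x * Real.sqrt (a x) -
            (L1 x * p' x + f x) * d x * Real.sqrt (a x)) τ from fun x _ => by
          simp only [hd]; ring),
        integral_sub hi1 hi2, h1d, h2d, sub_zero]
    have hvanish := key d hdc hzero
    have : d = 0 := zero_of_isPolyDegE'_zero_on_open hdpoly isOpen_interior hint hvanish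
    funext x
    have := congrFun this x
    simp only [hd, Pi.zero_apply] at this
    linarith
  have hv23 : v₂ ≠ v₃ := by
    intro h
    have h1 := hL2.1
    rw [h, hL2.2.2] at h1
    norm_num at h1
  have hL1seg : ∀ x ∈ segment ℝ v₂ v₃, L1 x = 0 := by
    intro x hx
    rw [segment_eq_image_lineMap] at hx
    obtain ⟨t, ht, rfl⟩ := hx
    rw [AffineMap.apply_lineMap, hL1.2.1, hL1.2.2]
    simp
  have hsegcomp : IsCompact (segment ℝ v₂ v₃) := by
    rw [segment_eq_image_lineMap]
    exact isCompact_Icc.image (AffineMap.lineMap v₂ v₃ : ℝ →ᵃ[ℝ] EuclideanSpace ℝ (Fin 2)).continuous_of_finiteDimensional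
  have hsegmeas : MeasurableSet (segment ℝ v₂ v₃) := hsegcomp.isClosed.measurableSet
  have hμseg : μH[1] (segment ℝ v₂ v₃) ≠ ⊤ := by
    rw [hausdorffMeasure_segment]
    exact edist_ne_top _ _
  have hIntSeg : ∀ F : EuclideanSpace ℝ (Fin 2) → ℝ, Continuous F →
      IntegrableOn F (segment ℝ v₂ v₃) μH[1] := by
    intro F hF
    obtain ⟨M, hM⟩ := hsegcomp.exists_bound_of_continuousOn hF.continuousOn
    exact Measure.integrableOn_of_bounded hμseg hF.aestronglyMeasurable
      ((ae_restrict_iff' hsegmeas).2 (Filter.Eventually.of_forall hM))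
  have moment : ∀ c₁ c₂ : ℝ,
      (∫ x in segment ℝ v₂ v₃, (c₁ + c₂ * L2 x) * Real.sqrt (a x) ∂μH[1]) = 0 →
      (∫ x in segment ℝ v₂ v₃, (c₁ + c₂ * L2 x) * L2 x * Real.sqrt (a x) ∂μH[1]) = 0 →
      c₁ = 0 ∧ c₂ = 0 := by
    intro c₁ c₂ h1 h2
    set g : EuclideanSpace ℝ (Fin 2) → ℝ := fun x => c₁ + c₂ * L2 x with hg
    have hgc : Continuous g := continuous_const.add (continuous_const.mul hL2cont)
    have h3 : (∫ x in segment ℝ v₂ v₃, g x * g x * Real.sqrt (a x) ∂μH[1]) = 0 := by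
      rw [setIntegral_congr_fun hsegmeas
        (show Set.EqOn (fun x => g x * g x * Real.sqrt (a x))
          (fun x => c₁ * ((c₁ + c₂ * L2 x) * Real.sqrt (a x)) +
            c₂ * ((c₁ + c₂ * L2 x) * L2 x * Real.sqrt (a x))) (segment ℝ v₂ v₃) from
          fun x _ => by simp only [hg]; ring),
        integral_add ((hIntSeg (fun x => (c₁ + c₂ * L2 x) * Real.sqrt (a x)) (hgc.mul hsqrt_cont)).const_mul c₁)
          ((hIntSeg (fun x => (c₁ + c₂ * L2 x) * L2 x * Real.sqrt (a x)) ((hgc.mul hL2cont).mul hsqrt_cont)).const_mul c₂),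
        integral_const_mul, integral_const_mul, h1, h2]
      ring
    have hnn : 0 ≤ᵐ[μH[1].restrict (segment ℝ v₂ v₃)]
        fun x => g x * g x * Real.sqrt (a x) :=
      Filter.Eventually.of_forall fun x =>
        mul_nonneg (mul_self_nonneg _) (Real.sqrt_nonneg _)
    have hae0 : (fun x => g x * g x * Real.sqrt (a x))
        =ᵐ[μH[1].restrict (segment ℝ v₂ v₃)] 0 :=
      (integral_eq_zero_iff_of_nonneg_ae hnn (hIntSeg _ ((hgc.mul hgc).mul hsqrt_cont))).1 h3
    have hNmeas : MeasurableSet {x : EuclideanSpace ℝ (Fin 2) |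
        g x * g x * Real.sqrt (a x) ≠ 0} :=
      (isClosed_eq ((hgc.mul hgc).mul hsqrt_cont) continuous_const).measurableSet.compl
    have hbad : μH[1] ({x : EuclideanSpace ℝ (Fin 2) | g x ≠ 0} ∩ segment ℝ v₂ v₃) = 0 := by
      have h0 : μH[1].restrict (segment ℝ v₂ v₃)
          {x | g x * g x * Real.sqrt (a x) ≠ 0} = 0 := by
        rw [Filter.EventuallyEq, ae_iff] at hae0
        simpa using hae0
      rw [Measure.restrict_apply hNmeas] at h0
      have hsame : {x : EuclideanSpace ℝ (Fin 2) | g x ≠ 0} ∩ segment ℝ v₂ v₃ =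
          {x | g x * g x * Real.sqrt (a x) ≠ 0} ∩ segment ℝ v₂ v₃ := by
        ext y
        simp only [Set.mem_inter_iff, Set.mem_setOf_eq]
        refine and_congr_left fun _ => ⟨fun h => ?_, fun h hgy => h (by rw [hgy]; ring)⟩
        exact mul_ne_zero (mul_ne_zero h h) (ne_of_gt (hsqrt_pos y))
      rw [hsame]
      exact h0
    have hA : volume (Set.Icc (0:ℝ) 1 ∩
        {t : ℝ | g (AffineMap.lineMap v₂ v₃ t) ≠ 0}) = 0 := by
      have himg : μH[1] ((AffineMap.lineMap v₂ v₃ : ℝ →ᵃ[ℝ] EuclideanSpace ℝ (Fin 2)) ''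
          (Set.Icc (0:ℝ) 1 ∩
            (AffineMap.lineMap v₂ v₃ : ℝ →ᵃ[ℝ] EuclideanSpace ℝ (Fin 2)) ⁻¹'
              {x | g x ≠ 0})) = 0 := by
        rw [Set.image_inter_preimage, ← segment_eq_image_lineMap, Set.inter_comm]
        exact hbad
      rw [hausdorffMeasure_lineMap_image, hausdorffMeasure_real, smul_eq_zero] at himg
      rcases himg with hc | hc
      · exact absurd hc (by simpa [nndist_eq_zero] using hv23)
      · exact hc
    have hψ : ∀ t : ℝ, g (AffineMap.lineMap v₂ v₃ t) = c₁ + c₂ * (1 - t) := by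
      intro t
      show c₁ + c₂ * L2 (AffineMap.lineMap v₂ v₃ t) = c₁ + c₂ * (1 - t)
      rw [AffineMap.apply_lineMap, hL2.1, hL2.2.2]
      simp only [AffineMap.lineMap_apply, smul_eq_mul, vsub_eq_sub, vadd_eq_add]
      ring
    by_cases hc₂ : c₂ = 0
    · subst hc₂
      refine ⟨?_, rfl⟩
      by_contra hc₁
      have hAeq : Set.Icc (0:ℝ) 1 ∩ {t : ℝ | g (AffineMap.lineMap v₂ v₃ t) ≠ 0} =
          Set.Icc (0:ℝ) 1 := by
        ext t
        simp [hψ, hc₁]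
      rw [hAeq, Real.volume_Icc] at hA
      norm_num at hA
    · exfalso
      set r : ℝ := (c₁ + c₂) / c₂ with hr
      have hsub : Set.Icc (0:ℝ) 1 \ {r} ⊆
          Set.Icc (0:ℝ) 1 ∩ {t : ℝ | g (AffineMap.lineMap v₂ v₃ t) ≠ 0} := by
        rintro t ⟨ht, htr⟩
        refine ⟨ht, ?_⟩
        simp only [Set.mem_setOf_eq, hψ]
        intro hcon
        apply htr
        have : t = r := by
          rw [hr]
          field_simp
          linarith
        simp [this]
      have hle := measure_mono (μ := (volume : Measure ℝ)) hsub
      rw [hA, nonpos_iff_eq_zero, measure_diff_null (measure_singleton r),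
        Real.volume_Icc] at hle
      norm_num at hle
  constructor
  · obtain ⟨p₁, hp₁, hc₁⟩ := exist_p (fun _ => (1:ℝ)) continuous_const
    obtain ⟨p₂, hp₂, hc₂⟩ := exist_p (fun x => L2 x) hL2cont
    refine ⟨(p₁, p₂), ⟨hp₁, hp₂, fun q hq => ?_, fun q hq => ?_⟩, ?_⟩
    · simpa using hc₁ q hq
    · simpa using hc₂ q hq
    · rintro ⟨q₁, q₂⟩ ⟨hq₁, hq₂, hd₁, hd₂⟩
      have e₁ : q₁ = p₁ := by
        refine uniq_p (fun _ => (1:ℝ)) q₁ p₁ continuous_const hq₁ hp₁ ?_ ?_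
        · intro q hq
          simpa using hd₁ q hq
        · intro q hq
          simpa using hc₁ q hq
      have e₂ : q₂ = p₂ := by
        refine uniq_p (fun x => L2 x) q₂ p₂ hL2cont hq₂ hp₂ ?_ ?_
        · intro q hq
          simpa using hd₂ q hq
        · intro q hq
          simpa using hc₂ q hq
      rw [Prod.mk.injEq]
      exact ⟨e₁, e₂⟩
  · rintro ⟨p₁, p₂⟩ ⟨hq₁, hq₂, hd₁, hd₂⟩
    constructor
    · intro x hx
      constructor <;> rw [hL1seg x hx] <;> ring
    · intro c₁ c₂ h1 h2
      apply moment c₁ c₂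
      · calc (∫ x in segment ℝ v₂ v₃, (c₁ + c₂ * L2 x) * Real.sqrt (a x) ∂μH[1])
            = ∫ x in segment ℝ v₂ v₃,
                (c₁ * (L1 x * p₁ x + 1) + c₂ * (L1 x * p₂ x + L2 x)) *
                  Real.sqrt (a x) ∂μH[1] :=
              setIntegral_congr_fun hsegmeas (fun x hx => by rw [hL1seg x hx]; ring)
          _ = 0 := h1
      · calc (∫ x in segment ℝ v₂ v₃, (c₁ + c₂ * L2 x) * L2 x * Real.sqrt (a x) ∂μH[1])
            = ∫ x in segment ℝ v₂ v₃,
                (c₁ * (L1 x * p₁ x + 1) + c₂ * (L1 x * p₂ x + L2 x)) * L2 x *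
                  Real.sqrt (a x) ∂μH[1] :=
              setIntegral_congr_fun hsegmeas (fun x hx => by rw [hL1seg x hx]; ring)
          _ = 0 := h2
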